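/- Let G be a connected graph of order n with r blocks, of which t are trivial (isomorphic to K_2). If every block of G is a minimally 2-connected triangle-free graph, then mvd(G) ≤ ⌊(n + 2t − r + 1)/2⌋. -/

import Mathlib

open SimpleGraph

variable {V : Type*}

/-- `S` is a set of vertices (not containing `x` or `y`) whose removal separates `x` from `y`:
every walk from `x` to `y` meets `S`. -/
def IsSepSet (G : SimpleGraph V) (S : Set V) (x y : V) : Prop :=
  x ∉ S ∧ y ∉ S ∧ ∀ p : G.Walk x y, ∃ v ∈ p.support, v ∈ S

/-- `τ` is an MVD-coloring of `G`: every pair of distinct nonadjacent vertices is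
separated by a monochromatic vertex cut. -/
def IsMVDColoring (G : SimpleGraph V) (τ : V → ℕ) : Prop :=
  ∀ x y : V, x ≠ y → ¬ G.Adj x y →
    ∃ S : Set V, IsSepSet G S x y ∧ ∀ u ∈ S, ∀ w ∈ S, τ u = τ w

/-- The monochromatic vertex-disconnection number: the maximum number of colors
used by an MVD-coloring of `G`. -/
noncomputable def mvd (G : SimpleGraph V) : ℕ :=
  sSup {k | ∃ τ : V → ℕ, IsMVDColoring G τ ∧ (Set.range τ).ncard = k}

/-- `G` has no cut vertex: removing any single vertex leaves a preconnected graph. -/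
def NoCutVertex (G : SimpleGraph V) : Prop :=
  ∀ v : V, (G.induce {u | u ≠ v}).Preconnected

/-- `B` is a block of `G`: a maximal vertex set inducing a connected subgraph
without a cut vertex. -/
def IsBlock (G : SimpleGraph V) (B : Set V) : Prop :=
  (G.induce B).Connected ∧ NoCutVertex (G.induce B) ∧
    ∀ C : Set V, B ⊆ C → (G.induce C).Connected → NoCutVertex (G.induce C) → C = B

/-- `G` is 2-connected: it is connected, has at least three vertices, and removing
any single vertex leaves a connected graph. -/
def IsTwoConnected (G : SimpleGraph V) : Prop :=
  G.Connected ∧ (∀ v : V, (G.induce {u | u ≠ v}).Connected) ∧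
    ∃ x y z : V, x ≠ y ∧ x ≠ z ∧ y ≠ z

/-- `G` is minimally 2-connected: it is 2-connected but deleting any edge destroys
2-connectivity. -/
def MinimallyTwoConnected (G : SimpleGraph V) : Prop :=
  IsTwoConnected G ∧ ∀ e ∈ G.edgeSet, ¬ IsTwoConnected (G.deleteEdges {e})

namespace MVDAux

variable {G : SimpleGraph V}

def Conn (G : SimpleGraph V) (W : Set V) (u v : V) : Prop :=
  ∃ p : G.Walk u v, ∀ z ∈ p.support, z ∈ W

namespace Conn

theorem mono {W W' : Set V} (h : W ⊆ W') {u v : V} (hc : Conn G W u v) : Conn G W' u v :=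
  let ⟨p, hp⟩ := hc; ⟨p, fun z hz => h (hp z hz)⟩

theorem refl {W : Set V} {u : V} (hu : u ∈ W) : Conn G W u u :=
  ⟨Walk.nil, by simp [hu]⟩

theorem symm {W : Set V} {u v : V} (hc : Conn G W u v) : Conn G W v u := by
  obtain ⟨p, hp⟩ := hc
  exact ⟨p.reverse, fun z hz => hp z (by simpa using hz)⟩

theorem trans {W : Set V} {u v x : V} (h1 : Conn G W u v) (h2 : Conn G W v x) :
    Conn G W u x := by
  obtain ⟨p, hp⟩ := h1
  obtain ⟨q, hq⟩ := h2
  refine ⟨p.append q, fun z hz => ?_⟩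
  rcases (Walk.mem_support_append_iff p q).mp hz with h | h
  exacts [hp z h, hq z h]

theorem mem_left {W : Set V} {u v : V} (hc : Conn G W u v) : u ∈ W := by
  obtain ⟨p, hp⟩ := hc
  exact hp u p.start_mem_support

theorem mem_right {W : Set V} {u v : V} (hc : Conn G W u v) : v ∈ W :=
  hc.symm.mem_left

end Conn

theorem walk_up {W : Set V} : ∀ {u v : V} (p : G.Walk u v), (∀ z ∈ p.support, z ∈ W) →
    ∀ (hu : u ∈ W) (hv : v ∈ W),
    ∃ q : (G.induce W).Walk ⟨u, hu⟩ ⟨v, hv⟩, ∀ z ∈ q.support, (z : V) ∈ p.support := by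
  intro u v p
  induction p with
  | nil =>
    intro _ hu hv
    exact ⟨Walk.nil, by simp⟩
  | @cons u w v h p ih =>
    intro hp hu hv
    have hw : w ∈ W := hp w (by simp)
    obtain ⟨q, hq⟩ := ih (fun z hz => hp z (by simp [hz])) hw hv
    refine ⟨Walk.cons (by exact h) q, fun z hz => ?_⟩
    change z ∈ (⟨u, hu⟩ : ↥W) :: q.support at hz
    rw [List.mem_cons] at hz
    rcases hz with rfl | hz
    · simp
    · simp [hq z hz]

theorem walk_down {W : Set V} {a b : ↥W} (q : (G.induce W).Walk a b) :
    ∃ p : G.Walk (a : V) (b : V), ∀ z ∈ p.support, ∃ z' ∈ q.support, (z' : V) = z := by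
  refine ⟨q.map ⟨Subtype.val, fun {x y} h => h⟩, fun z hz => ?_⟩
  rw [Walk.support_map, List.mem_map] at hz
  obtain ⟨z', hz', rfl⟩ := hz
  exact ⟨z', hz', rfl⟩

theorem induce_preconnected_iff {W : Set V} :
    (G.induce W).Preconnected ↔ ∀ u ∈ W, ∀ v ∈ W, Conn G W u v := by
  constructor
  · intro h u hu v hv
    obtain ⟨q⟩ := h ⟨u, hu⟩ ⟨v, hv⟩
    obtain ⟨p, hp⟩ := walk_down q
    exact ⟨p, fun z hz => by obtain ⟨z', _, rfl⟩ := hp z hz; exact z'.2⟩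
  · intro h a b
    obtain ⟨p, hp⟩ := h a a.2 b b.2
    obtain ⟨q, _⟩ := walk_up p hp a.2 b.2
    exact ⟨q⟩

theorem induce_connected_iff {W : Set V} :
    (G.induce W).Connected ↔ W.Nonempty ∧ ∀ u ∈ W, ∀ v ∈ W, Conn G W u v := by
  rw [connected_iff, induce_preconnected_iff, Set.nonempty_coe_sort]
  tauto

theorem noCutVertex_induce_iff {W : Set V} :
    NoCutVertex (G.induce W) ↔
      ∀ x ∈ W, ∀ u ∈ W \ {x}, ∀ v ∈ W \ {x}, Conn G (W \ {x}) u v := by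
  constructor
  · intro h x hx u hu v hv
    have h' := h ⟨x, hx⟩
    rw [induce_preconnected_iff] at h'
    have hu' : (⟨u, hu.1⟩ : ↥W) ∈ {y : ↥W | y ≠ ⟨x, hx⟩} := by
      simp only [Set.mem_setOf_eq, ne_eq, Subtype.mk.injEq]
      exact hu.2
    have hv' : (⟨v, hv.1⟩ : ↥W) ∈ {y : ↥W | y ≠ ⟨x, hx⟩} := by
      simp only [Set.mem_setOf_eq, ne_eq, Subtype.mk.injEq]
      exact hv.2
    obtain ⟨q, hq⟩ := h' _ hu' _ hv'
    obtain ⟨p, hp⟩ := walk_down q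
    refine ⟨p, fun z hz => ?_⟩
    obtain ⟨z', hz', rfl⟩ := hp z hz
    refine ⟨z'.2, ?_⟩
    have := hq z' hz'
    simp only [Set.mem_setOf_eq, ne_eq] at this
    intro hzx
    exact this (Subtype.ext hzx)
  · intro h x
    rw [induce_preconnected_iff]
    intro a ha b hb
    have ha' : (a : V) ∈ W \ {(x : V)} := ⟨a.2, fun hax => ha (Subtype.ext hax)⟩
    have hb' : (b : V) ∈ W \ {(x : V)} := ⟨b.2, fun hbx => hb (Subtype.ext hbx)⟩
    obtain ⟨p, hp⟩ := h x x.2 _ ha' _ hb'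
    obtain ⟨q, hq⟩ := walk_up p (fun z hz => (hp z hz).1) a.2 b.2
    refine ⟨q.copy (by simp) (by simp), fun z hz => ?_⟩
    rw [Walk.support_copy] at hz
    have := (hp z (hq z hz)).2
    simp only [Set.mem_setOf_eq, ne_eq]
    intro hzc
    exact this (by rw [hzc]; exact Set.mem_singleton _)

theorem periodic_mod {α : Sort*} (f : ℕ → α) {m : ℕ} (hm : 0 < m)
    (hf : ∀ l, f (l + m) = f l) : ∀ l, f l = f (l % m) := by
  intro l
  induction l using Nat.strong_induction_on with
  | _ l IH =>
    rcases lt_or_ge l m with h | h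
    · rw [Nat.mod_eq_of_lt h]
    · have h1 : l - m + m = l := by omega
      have := hf (l - m)
      rw [h1] at this
      rw [this, IH (l - m) (by omega), Nat.mod_eq_sub_mod h]

theorem mod_ne_of_between {a b m : ℕ} (h1 : a < b) (h2 : b < a + m) : a % m ≠ b % m := by
  intro h
  have hdvd : m ∣ b - a := (Nat.modEq_iff_dvd' (le_of_lt h1)).mp h
  have := Nat.le_of_dvd (by omega) hdvd
  omega



section Blocks

variable [Fintype V] {G : SimpleGraph V}
variable {r : ℕ} {B : Fin r → Set V}

theorem blk_conn (hB : ∀ i, IsBlock G (B i)) (i : Fin r) :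
    ∀ u ∈ B i, ∀ v ∈ B i, Conn G (B i) u v :=
  (induce_connected_iff.mp (hB i).1).2

theorem blk_nocut (hB : ∀ i, IsBlock G (B i)) (i : Fin r) :
    ∀ x ∈ B i, ∀ u ∈ B i \ {x}, ∀ v ∈ B i \ {x}, Conn G (B i \ {x}) u v :=
  noCutVertex_induce_iff.mp (hB i).2.1

theorem blk_card
    (hmin : ∀ i, (B i).ncard = 2 ∨
      (MinimallyTwoConnected (G.induce (B i)) ∧ (G.induce (B i)).CliqueFree 3))
    (i : Fin r) : 2 ≤ (B i).ncard := by
  rcases hmin i with h | ⟨⟨⟨_, _, x, y, z, hxy, hxz, hyz⟩, _⟩, _⟩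
  · omega
  · have hsub : {(x : V), (y : V)} ⊆ B i := by
      rintro w (rfl | rfl)
      exacts [x.2, y.2]
    have : ({(x : V), (y : V)} : Set V).ncard = 2 :=
      Set.ncard_pair (fun h => hxy (Subtype.ext h))
    calc 2 = ({(x : V), (y : V)} : Set V).ncard := this.symm
      _ ≤ (B i).ncard := Set.ncard_le_ncard hsub (Set.toFinite _)

theorem blk_card3
    (hmin : ∀ i, (B i).ncard = 2 ∨
      (MinimallyTwoConnected (G.induce (B i)) ∧ (G.induce (B i)).CliqueFree 3))
    {i : Fin r} (hnt : (B i).ncard ≠ 2) : 3 ≤ (B i).ncard := by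
  rcases hmin i with h | ⟨⟨⟨_, _, x, y, z, hxy, hxz, hyz⟩, _⟩, _⟩
  · omega
  · have hsub : {(x : V), (y : V), (z : V)} ⊆ B i := by
      rintro w (rfl | rfl | rfl)
      exacts [x.2, y.2, z.2]
    have h3 : ({(x : V), (y : V), (z : V)} : Set V).ncard = 3 := by
      rw [Set.ncard_insert_of_notMem (by
        simp only [Set.mem_insert_iff, Set.mem_singleton_iff]
        push_neg
        exact ⟨fun h => hxy (Subtype.ext h), fun h => hxz (Subtype.ext h)⟩)
        (Set.toFinite _), Set.ncard_pair (fun h => hyz (Subtype.ext h))]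
    calc 3 = ({(x : V), (y : V), (z : V)} : Set V).ncard := h3.symm
      _ ≤ (B i).ncard := Set.ncard_le_ncard hsub (Set.toFinite _)

theorem blocks_eq_of_two (hB : ∀ i, IsBlock G (B i)) {i j : Fin r} {x y : V}
    (hxy : x ≠ y) (hxi : x ∈ B i) (hyi : y ∈ B i) (hxj : x ∈ B j) (hyj : y ∈ B j) :
    B i = B j := by
  set W : Set V := B i ∪ B j with hW
  have piece : ∀ k : Fin r, k = i ∨ k = j → ∀ u ∈ B k, Conn G W u x := by
    rintro k hk u hu
    rcases hk with rfl | rfl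
    · exact (blk_conn hB k u hu x hxi).mono Set.subset_union_left
    · exact (blk_conn hB k u hu x hxj).mono Set.subset_union_right
  have hWconn : (G.induce W).Connected := by
    rw [induce_connected_iff]
    refine ⟨⟨x, Or.inl hxi⟩, fun u hu v hv => ?_⟩
    have cu : Conn G W u x := by
      rcases hu with hu | hu
      exacts [piece i (Or.inl rfl) u hu, piece j (Or.inr rfl) u hu]
    have cv : Conn G W v x := by
      rcases hv with hv | hv
      exacts [piece i (Or.inl rfl) v hv, piece j (Or.inr rfl) v hv]
    exact cu.trans cv.symm
  have hWnocut : NoCutVertex (G.induce W) := by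
    rw [noCutVertex_induce_iff]
    intro z hz u hu v hv
    obtain ⟨s, hsi, hsj, hsz⟩ : ∃ s, s ∈ B i ∧ s ∈ B j ∧ s ≠ z := by
      rcases eq_or_ne x z with rfl | hxz
      · exact ⟨y, hyi, hyj, fun h => hxy h.symm⟩
      · exact ⟨x, hxi, hxj, hxz⟩
    have piece' : ∀ k : Fin r, k = i ∨ k = j → ∀ u' ∈ B k \ {z}, Conn G (W \ {z}) u' s := by
      rintro k hk u' hu'
      have hsk : s ∈ B k := by rcases hk with rfl | rfl; exacts [hsi, hsj]
      have hsub : B k ⊆ W := by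
        rcases hk with rfl | rfl
        · exact Set.subset_union_left
        · exact Set.subset_union_right
      by_cases hzk : z ∈ B k
      · refine (blk_nocut hB k z hzk u' hu' s ⟨hsk, hsz⟩).mono ?_
        intro w hw
        exact ⟨hsub hw.1, hw.2⟩
      · refine (blk_conn hB k u' hu'.1 s hsk).mono ?_
        intro w hw
        exact ⟨hsub hw, fun h => hzk ((Set.mem_singleton_iff.mp h) ▸ hw)⟩
    have cu : Conn G (W \ {z}) u s := by
      rcases hu.1 with h | h
      exacts [piece' i (Or.inl rfl) u ⟨h, hu.2⟩, piece' j (Or.inr rfl) u ⟨h, hu.2⟩]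
    have cv : Conn G (W \ {z}) v s := by
      rcases hv.1 with h | h
      exacts [piece' i (Or.inl rfl) v ⟨h, hv.2⟩, piece' j (Or.inr rfl) v ⟨h, hv.2⟩]
    exact cu.trans cv.symm
  have h1 : W = B i := (hB i).2.2 W Set.subset_union_left hWconn hWnocut
  have h2 : W = B j := (hB j).2.2 W Set.subset_union_right hWconn hWnocut
  rw [← h1, ← h2]

theorem cycle_absurd (hB : ∀ i, IsBlock G (B i)) (hinj : Function.Injective B)
    (hmin : ∀ i, (B i).ncard = 2 ∨
      (MinimallyTwoConnected (G.induce (B i)) ∧ (G.induce (B i)).CliqueFree 3))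
    {m : ℕ} (hm : 3 ≤ m) (c : ℕ → Fin r) (w : ℕ → V)
    (hpc : ∀ l, c (l + m) = c l) (hpw : ∀ l, w (l + m) = w l)
    (hl1 : ∀ l, w l ∈ B (c l)) (hl2 : ∀ l, w l ∈ B (c (l + 1)))
    (hwinj : ∀ a b, a < b → b < a + m → w a ≠ w b)
    (hc01 : c 1 ≠ c 0) : False := by
  set W : Set V := {z | ∃ l, l < m ∧ z ∈ B (c l)} with hWdef
  have hm0 : 0 < m := by omega
  have hcmod : ∀ l, c l = c (l % m) := periodic_mod c hm0 hpc
  have hwmod : ∀ l, w l = w (l % m) := periodic_mod w hm0 hpw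
  have hBsub : ∀ l, B (c l) ⊆ W := by
    intro l z hz
    rw [hcmod l] at hz
    exact ⟨l % m, Nat.mod_lt _ hm0, hz⟩
  have hwW : ∀ l, w l ∈ W := fun l => hBsub l (hl1 l)
  have H1 : ∀ (k a : ℕ), Conn G W (w a) (w (a + k)) := by
    intro k
    induction k with
    | zero => exact fun a => Conn.refl (hwW a)
    | succ k ih =>
      intro a
      refine (ih a).trans ?_
      exact (blk_conn hB (c (a + k + 1)) (w (a + k)) (hl2 _) (w (a + k + 1)) (hl1 _)).mono
        (hBsub _)
  have hWconn : (G.induce W).Connected := by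
    rw [induce_connected_iff]
    refine ⟨⟨w 0, hwW 0⟩, fun u hu v hv => ?_⟩
    obtain ⟨a, ham, hua⟩ := hu
    obtain ⟨b, hbm, hvb⟩ := hv
    have cu : Conn G W u (w a) := (blk_conn hB (c a) u hua (w a) (hl1 a)).mono (hBsub a)
    have cv : Conn G W v (w b) := (blk_conn hB (c b) v hvb (w b) (hl1 b)).mono (hBsub b)
    have cab : Conn G W (w a) (w b) := by
      have h := H1 (m - a + b) a
      rw [show a + (m - a + b) = b + m by omega, hpw] at h
      exact h
    exact cu.trans (cab.trans cv.symm)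
  have hWnocut : NoCutVertex (G.induce W) := by
    rw [noCutVertex_induce_iff]
    intro x hx u hu v hv
    have piece : ∀ l, ∀ u' ∈ B (c l) \ {x}, ∀ v' ∈ B (c l) \ {x},
        Conn G (W \ {x}) u' v' := by
      intro l u' hu' v' hv'
      by_cases hxl : x ∈ B (c l)
      · refine (blk_nocut hB (c l) x hxl u' hu' v' hv').mono ?_
        intro z hz
        exact ⟨hBsub l hz.1, hz.2⟩
      · refine (blk_conn hB (c l) u' hu'.1 v' hv'.1).mono ?_
        intro z hz
        exact ⟨hBsub l hz, fun h => hxl ((Set.mem_singleton_iff.mp h) ▸ hz)⟩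
    obtain ⟨base, hbase⟩ : ∃ base, ∀ e, e < m - 1 → w (base + e) ≠ x := by
      by_cases hbx : ∃ l, l < m ∧ w l = x
      · obtain ⟨a, ham, hax⟩ := hbx
        refine ⟨a + 1, fun e he hex => ?_⟩
        exact hwinj a (a + 1 + e) (by omega) (by omega) (by rw [hax, hex])
      · push_neg at hbx
        refine ⟨0, fun e he hex => ?_⟩
        exact hbx e (by omega) (by simpa using hex)
    have H2 : ∀ e, e < m → ∀ v', v' ∈ B (c (base + e)) \ {x} →
        Conn G (W \ {x}) (w base) v' := by
      intro e
      induction e with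
      | zero =>
        intro _ v' hv'
        exact piece base (w base) ⟨hl1 base, hbase 0 (by omega)⟩ v' hv'
      | succ e ih =>
        intro he v' hv'
        have hlk1 : w (base + e) ∈ B (c (base + e + 1)) \ {x} := ⟨hl2 _, hbase e (by omega)⟩
        have hlk0 : w (base + e) ∈ B (c (base + e)) \ {x} := ⟨hl1 _, hbase e (by omega)⟩
        exact (ih (by omega) _ hlk0).trans (piece (base + e + 1) _ hlk1 v' hv')
    have hrep : ∀ a, a < m → ∃ e, e < m ∧ c (base + e) = c a ∧ w (base + e) = w a := by
      intro a ham
      set X := (a + m - base % m) % m with hX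
      have hXm : X < m := Nat.mod_lt _ hm0
      have hmodeq : (base + X) % m = a % m := by
        have hβ : base % m < m := Nat.mod_lt _ hm0
        have h1 : X ≡ a + m - base % m [MOD m] := Nat.mod_modEq _ _
        have h2 : base ≡ base % m [MOD m] := (Nat.mod_modEq _ _).symm
        have h3 : base + X ≡ base % m + (a + m - base % m) [MOD m] := h2.add h1
        rw [show base % m + (a + m - base % m) = a + m by omega] at h3
        have h4 : (a + m) % m = a % m := Nat.add_mod_right a m
        exact h3.trans (by rw [Nat.ModEq]; rw [h4])
      refine ⟨X, hXm, ?_, ?_⟩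
      · rw [hcmod (base + X), hcmod a, hmodeq]
      · rw [hwmod (base + X), hwmod a, hmodeq]
    obtain ⟨a, ham, hua⟩ := hu.1
    obtain ⟨e, hem, hce, _⟩ := hrep a ham
    obtain ⟨b, hbm, hvb⟩ := hv.1
    obtain ⟨e', he'm, hce', _⟩ := hrep b hbm
    have cu := H2 e hem u ⟨hce ▸ hua, hu.2⟩
    have cv := H2 e' he'm v ⟨hce' ▸ hvb, hv.2⟩
    exact cu.symm.trans cv
  have hmax : W = B (c 0) := (hB (c 0)).2.2 W (hBsub 0) hWconn hWnocut
  obtain ⟨z, hz, z', hz', hzz⟩ : ∃ z ∈ B (c 1), ∃ z' ∈ B (c 1), z ≠ z' := by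
    have h2 : 1 < (B (c 1)).ncard := lt_of_lt_of_le (by norm_num) (blk_card hmin (c 1))
    obtain ⟨z, z', hz, hz', hne⟩ := (Set.one_lt_ncard_iff (Set.toFinite _)).mp h2
    exact ⟨z, hz, z', hz', hne⟩
  have hzW : z ∈ B (c 0) := hmax ▸ hBsub 1 hz
  have hz'W : z' ∈ B (c 0) := hmax ▸ hBsub 1 hz'
  exact hc01 (hinj (blocks_eq_of_two hB hzz hz hz' hzW hz'W))

theorem no_two_overlap (hB : ∀ i, IsBlock G (B i)) (hinj : Function.Injective B)
    (hmin : ∀ i, (B i).ncard = 2 ∨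
      (MinimallyTwoConnected (G.induce (B i)) ∧ (G.induce (B i)).CliqueFree 3)) :
    ∀ (q : ℕ) (f : ℕ → Fin r) (g : ℕ → V) (i : Fin r) (x y : V),
      (∀ a, a ≤ q → f a ≠ i) →
      (∀ a, a < q → g a ∈ B (f a) ∧ g a ∈ B (f (a + 1))) →
      x ≠ y → x ∈ B i → x ∈ B (f 0) → y ∈ B i → y ∈ B (f q) → False := by
  intro q
  induction q using Nat.strong_induction_on with
  | _ q IH =>
  intro f g i x y hfi hg hxy hxi hxf0 hyi hyfq
  rcases Nat.eq_zero_or_pos q with rfl | hq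
  · exact hfi 0 le_rfl (hinj (blocks_eq_of_two hB hxy hxf0 hyfq hxi hyi).symm).symm
  by_cases h2 : ∃ a, a < q ∧ g a = x
  · obtain ⟨a, haq, hax⟩ := h2
    refine IH (q - a - 1) (by omega) (fun b => f (a + 1 + b)) (fun b => g (a + 1 + b)) i x y
      (fun b hb => hfi (a + 1 + b) (by omega))
      (fun b hb => hg (a + 1 + b) (by omega))
      hxy hxi (hax ▸ (hg a haq).2) hyi ?_
    have h : a + 1 + (q - a - 1) = q := by omega
    show y ∈ B (f (a + 1 + (q - a - 1)))
    rw [h]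
    exact hyfq
  by_cases h3 : ∃ a, a < q ∧ g a = y
  · obtain ⟨a, haq, hay⟩ := h3
    exact IH a (by omega) f g i x y (fun b hb => hfi b (by omega))
      (fun b hb => hg b (by omega)) hxy hxi hxf0 hyi (hay ▸ (hg a haq).1)
  by_cases h4 : ∃ a b, a < b ∧ b < q ∧ g a = g b
  · obtain ⟨a, b, hab, hbq, hgab⟩ := h4
    refine IH (q - (b - a)) (by omega) (fun d => if d ≤ a then f d else f (d + (b - a)))
      (fun d => if d < a then g d else if d = a then g b else g (d + (b - a))) i x y
      ?_ ?_ hxy hxi ?_ hyi ?_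
    · intro d hd
      by_cases hda : d ≤ a
      · simpa [hda] using hfi d (by omega)
      · simpa [hda] using hfi (d + (b - a)) (by omega)
    · intro d hd
      rcases lt_trichotomy d a with h | h | h
      · have hd1 : d + 1 ≤ a := by omega
        simp only [if_pos h, if_pos (le_of_lt h), if_pos hd1]
        exact hg d (by omega)
      · subst h
        have : ¬ (d + 1 ≤ d) := by omega
        simp only [lt_irrefl, if_neg (lt_irrefl d), if_pos rfl, if_pos le_rfl, if_neg this]
        constructor
        · rw [← hgab]; exact (hg d (by omega)).1
        · have h' : d + 1 + (b - d) = b + 1 := by omega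
          rw [h']
          exact (hg b hbq).2
      · have h1 : ¬ (d < a) := by omega
        have h2' : ¬ (d = a) := by omega
        have h3' : ¬ (d ≤ a) := by omega
        have h4' : ¬ (d + 1 ≤ a) := by omega
        simp only [if_neg h1, if_neg h2', if_neg h3', if_neg h4']
        have h' : d + 1 + (b - a) = d + (b - a) + 1 := by omega
        rw [h']
        exact hg (d + (b - a)) (by omega)
    · simpa using hxf0
    · have h1 : ¬ (q - (b - a) ≤ a) := by omega
      have h2' : q - (b - a) + (b - a) = q := by omega
      simp only [if_neg h1, h2']
      exact hyfq
  -- terminal: build a cycle and contradict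
  push_neg at h2 h3 h4
  set m := q + 2 with hmdef
  have hm2 : 1 < m := by omega
  have hmod1 : ∀ l : ℕ, (l + 1) % m = (l % m + 1) % m := by
    intro l
    conv_lhs => rw [Nat.add_mod, Nat.mod_eq_of_lt hm2]
  refine cycle_absurd hB hinj hmin (m := m) (by omega)
    (fun l => if l % m = 0 then i else f (l % m - 1))
    (fun l => if l % m = 0 then x else if l % m = q + 1 then y else g (l % m - 1))
    (fun l => by simp [Nat.add_mod_right]) (fun l => by simp [Nat.add_mod_right])
    ?_ ?_ ?_ ?_
  · -- hl1
    intro l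
    rcases Nat.lt_or_ge (l % m) 1 with h0 | h0
    · have h0' : l % m = 0 := by omega
      simp only [if_pos h0']
      exact hxi
    · have h0' : ¬ (l % m = 0) := by omega
      have hlt : l % m < m := Nat.mod_lt _ (by omega)
      by_cases hq1 : l % m = q + 1
      · simp only [if_neg h0', if_pos hq1, hq1]
        exact hyfq
      · simp only [if_neg h0', if_neg hq1]
        exact (hg (l % m - 1) (by omega)).1
  · -- hl2
    intro l
    have hlt : l % m < m := Nat.mod_lt _ (by omega)
    beta_reduce
    rw [hmod1 l]
    rcases Nat.lt_or_ge (l % m) 1 with h0 | h0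
    · have h0' : l % m = 0 := by omega
      have h1 : (l % m + 1) % m = 1 := by rw [h0']; exact Nat.mod_eq_of_lt (by omega)
      simp only [if_pos h0', h1, if_neg (by omega : ¬ (1 : ℕ) = 0)]
      exact hxf0
    · have h0' : ¬ (l % m = 0) := by omega
      by_cases hq1 : l % m = q + 1
      · have h1 : (l % m + 1) % m = 0 := by rw [hq1]; simp [hmdef]
        simp only [if_neg h0', if_pos hq1, h1, if_pos rfl]
        exact hyi
      · have h1 : (l % m + 1) % m = l % m + 1 := Nat.mod_eq_of_lt (by omega)
        simp only [if_neg h0', if_neg hq1, h1, if_neg (by omega : ¬ l % m + 1 = 0)]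
        rw [show l % m + 1 - 1 = l % m - 1 + 1 from by omega]
        exact (hg (l % m - 1) (by omega)).2
  · -- hwinj
    intro a b hab hbam
    have hne : a % m ≠ b % m := mod_ne_of_between hab hbam
    have ha : a % m < m := Nat.mod_lt _ (by omega)
    have hb : b % m < m := Nat.mod_lt _ (by omega)
    beta_reduce
    intro heq
    by_cases hA0 : a % m = 0
    · rw [if_pos hA0] at heq
      by_cases hB0 : b % m = 0
      · exact hne (by omega)
      · rw [if_neg hB0] at heq
        by_cases hBq : b % m = q + 1
        · rw [if_pos hBq] at heq; exact hxy heq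
        · rw [if_neg hBq] at heq; exact h2 (b % m - 1) (by omega) heq.symm
    · rw [if_neg hA0] at heq
      by_cases hAq : a % m = q + 1
      · rw [if_pos hAq] at heq
        by_cases hB0 : b % m = 0
        · rw [if_pos hB0] at heq; exact hxy heq.symm
        · rw [if_neg hB0] at heq
          by_cases hBq : b % m = q + 1
          · exact hne (by omega)
          · rw [if_neg hBq] at heq; exact h3 (b % m - 1) (by omega) heq.symm
      · rw [if_neg hAq] at heq
        by_cases hB0 : b % m = 0
        · rw [if_pos hB0] at heq; exact h2 (a % m - 1) (by omega) heq
        · rw [if_neg hB0] at heq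
          by_cases hBq : b % m = q + 1
          · rw [if_pos hBq] at heq; exact h3 (a % m - 1) (by omega) heq
          · rw [if_neg hBq] at heq
            rcases lt_trichotomy (a % m - 1) (b % m - 1) with h | h | h
            · exact h4 (a % m - 1) (b % m - 1) h (by omega) heq
            · exact hne (by omega)
            · exact h4 (b % m - 1) (a % m - 1) h (by omega) heq.symm
  · -- hc01
    have h1 : (1 : ℕ) % m = 1 := Nat.mod_eq_of_lt (by omega)
    have h0 : (0 : ℕ) % m = 0 := Nat.zero_mod m
    simp only [h1, h0, if_neg (by omega : ¬ (1:ℕ) = 0), if_pos rfl]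
    exact fun h => hfi 0 (by omega) h

def LStep (B : Fin r → Set V) (S : Finset (Fin r)) (a b : Fin r) : Prop :=
  b ∈ S ∧ (B a ∩ B b).Nonempty

def LinkConn (B : Fin r → Set V) (S : Finset (Fin r)) : Prop :=
  ∀ i ∈ S, ∀ j ∈ S, Relation.ReflTransGen (LStep B S) i j

theorem mem_of_rtg {S : Finset (Fin r)} {i j : Fin r} (hi : i ∈ S)
    (h : Relation.ReflTransGen (LStep B S) i j) : j ∈ S := by
  induction h with
  | refl => exact hi
  | tail _ hbc _ => exact hbc.1

theorem rtg_symm {S : Finset (Fin r)} {i j : Fin r} (hi : i ∈ S)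
    (h : Relation.ReflTransGen (LStep B S) i j) :
    Relation.ReflTransGen (LStep B S) j i := by
  induction h with
  | refl => exact Relation.ReflTransGen.refl
  | @tail b c hab hbc ih =>
    exact Relation.ReflTransGen.head ⟨mem_of_rtg hi hab, Set.inter_comm _ _ ▸ hbc.2⟩ ih

theorem chain_of_rtg (hv : V → True) {S : Finset (Fin r)} {j l : Fin r} (hj : j ∈ S)
    (hBne : ∀ i : Fin r, (B i).Nonempty)
    (h : Relation.ReflTransGen (LStep B S) j l) :
    ∃ (q : ℕ) (f : ℕ → Fin r) (g : ℕ → V), f 0 = j ∧ f q = l ∧ (∀ a, a ≤ q → f a ∈ S) ∧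
      ∀ a, a < q → g a ∈ B (f a) ∧ g a ∈ B (f (a + 1)) := by
  induction h with
  | refl =>
    exact ⟨0, fun _ => j, fun _ => (hBne j).choose, rfl, rfl,
      fun a _ => hj, fun a ha => absurd ha (by omega)⟩
  | @tail b c hab hbc ih =>
    obtain ⟨q, f, g, h0, hq, hS, hg⟩ := ih
    obtain ⟨hcS, xx, hxx⟩ := hbc
    refine ⟨q + 1, fun a => if a ≤ q then f a else c, fun a => if a < q then g a else xx,
      ?_, ?_, ?_, ?_⟩
    · simp [h0]
    · simp
    · intro a ha
      by_cases h' : a ≤ q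
      · simpa [h'] using hS a h'
      · simpa [h'] using hcS
    · intro a ha
      by_cases h' : a < q
      · have h1 : a ≤ q := by omega
        have h2 : a + 1 ≤ q := by omega
        simp only [if_pos h', if_pos h1, if_pos h2]
        exact hg a h'
      · have ha' : a = q := by omega
        subst ha'
        have h2 : ¬ (a + 1 ≤ a) := by omega
        simp only [if_neg h', if_pos le_rfl, if_neg h2]
        rw [hq]
        exact ⟨hxx.1, hxx.2⟩

theorem cd_to_rtg {T : Finset (Fin r)} :
    ∀ (k : ℕ) (f : ℕ → Fin r), (∀ a, a ≤ k → f a ∈ T) →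
      (∀ a, a < k → (B (f a) ∩ B (f (a + 1))).Nonempty) →
      Relation.ReflTransGen (LStep B T) (f 0) (f k) := by
  intro k
  induction k with
  | zero => exact fun f _ _ => Relation.ReflTransGen.refl
  | succ k ih =>
    intro f hmem hlink
    exact Relation.ReflTransGen.tail
      (ih f (fun a ha => hmem a (by omega)) (fun a ha => hlink a (by omega)))
      ⟨hmem (k + 1) le_rfl, hlink k (by omega)⟩

theorem exists_linkage_noncut {S : Finset (Fin r)} (hBne : ∀ i : Fin r, (B i).Nonempty)
    (hS2 : 2 ≤ S.card) (hL : LinkConn B S) :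
    ∃ i ∈ S, (S.erase i).Nonempty ∧ LinkConn B (S.erase i) ∧
      ∃ j ∈ S.erase i, (B j ∩ B i).Nonempty := by
  classical
  obtain ⟨ρ, hρ⟩ := Finset.card_pos.mp (by omega : 0 < S.card)
  set CD : ℕ → Fin r → Prop := fun k j => ∃ f : ℕ → Fin r, f 0 = ρ ∧ f k = j ∧
    (∀ a, a ≤ k → f a ∈ S) ∧ ∀ a, a < k → (B (f a) ∩ B (f (a + 1))).Nonempty with hCD
  have hne : ∀ j ∈ S, ∃ k, CD k j := by
    intro j hj
    obtain ⟨q, f, g, h0, hq, hS, hg⟩ := chain_of_rtg (fun _ => trivial) hρ hBne (hL ρ hρ j hj)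
    exact ⟨q, f, h0, hq, hS, fun a ha => ⟨g a, (hg a ha).1, (hg a ha).2⟩⟩
  set d : Fin r → ℕ := fun j => sInf {k | CD k j} with hd
  have hd_spec : ∀ j ∈ S, CD (d j) j := fun j hj => Nat.sInf_mem (hne j hj)
  have hd_le : ∀ j k, CD k j → d j ≤ k := fun j k h => Nat.sInf_le h
  have hdρ : d ρ = 0 := Nat.le_zero.mp (hd_le ρ 0
    ⟨fun _ => ρ, rfl, rfl, fun a _ => hρ, fun a ha => absurd ha (by omega)⟩)
  have hd0 : ∀ j ∈ S, d j = 0 → j = ρ := by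
    intro j hj h0
    obtain ⟨f, hf0, hfk, _, _⟩ := h0 ▸ hd_spec j hj
    rw [← hfk, hf0]
  obtain ⟨i, hiS, hmax⟩ := S.exists_max_image d ⟨ρ, hρ⟩
  obtain ⟨j1, hj1S, hj1ρ⟩ : ∃ j1 ∈ S, j1 ≠ ρ := by
    by_contra hc
    push_neg at hc
    have : S ⊆ {ρ} := fun a ha => Finset.mem_singleton.mpr (hc a ha)
    have := Finset.card_le_card this
    simp at this
    omega
  have hdi_pos : 0 < d i := by
    rcases Nat.eq_zero_or_pos (d i) with h0 | h0
    · have h1 := hmax j1 hj1S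
      rw [h0] at h1
      have := hd0 j1 hj1S (by omega)
      exact absurd this hj1ρ
    · exact h0
  have hiρ : i ≠ ρ := by
    intro h
    rw [h, hdρ] at hdi_pos
    omega
  have hprefix : ∀ j ∈ S, ∀ (f : ℕ → Fin r), f 0 = ρ → f (d j) = j →
      (∀ a, a ≤ d j → f a ∈ S) → (∀ a, a < d j → (B (f a) ∩ B (f (a + 1))).Nonempty) →
      ∀ a, a < d j → f a ≠ i := by
    intro j hj f hf0 hfk hfS hflink a ha hfa
    have hcd : CD a (f a) := ⟨f, hf0, rfl, fun b hb => hfS b (by omega),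
      fun b hb => hflink b (by omega)⟩
    have h1 : d i ≤ a := hfa ▸ hd_le (f a) a hcd
    have h2 : d j ≤ d i := hmax j hj
    omega
  refine ⟨i, hiS, ⟨ρ, Finset.mem_erase.mpr ⟨fun h => hiρ h.symm, hρ⟩⟩, ?_, ?_⟩
  · -- LinkConn on erase
    have key : ∀ j ∈ S.erase i, Relation.ReflTransGen (LStep B (S.erase i)) ρ j := by
      intro j hjer
      have hjS : j ∈ S := Finset.mem_of_mem_erase hjer
      have hji : j ≠ i := Finset.ne_of_mem_erase hjer
      obtain ⟨f, hf0, hfk, hfS, hflink⟩ := hd_spec j hjS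
      have hfner : ∀ a, a ≤ d j → f a ∈ S.erase i := by
        intro a ha
        rcases eq_or_lt_of_le ha with rfl | ha'
        · rw [hfk]; exact Finset.mem_erase.mpr ⟨hji, hjS⟩
        · exact Finset.mem_erase.mpr
            ⟨hprefix j hjS f hf0 hfk hfS hflink a ha', hfS a ha⟩
      have := cd_to_rtg (d j) f hfner hflink
      rwa [hf0, hfk] at this
    intro a ha b hb
    exact Relation.ReflTransGen.trans
      (rtg_symm (Finset.mem_erase.mpr ⟨fun h => hiρ h.symm, hρ⟩) (key a ha)) (key b hb)
  · -- a neighbor of i inside erase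
    obtain ⟨f, hf0, hfk, hfS, hflink⟩ := hd_spec i hiS
    set k := d i with hk
    refine ⟨f (k - 1), ?_, ?_⟩
    · refine Finset.mem_erase.mpr ⟨?_, hfS (k - 1) (by omega)⟩
      exact hprefix i hiS f hf0 hfk hfS hflink (k - 1) (by omega)
    · have := hflink (k - 1) (by omega)
      rw [show k - 1 + 1 = k from by omega, hfk] at this
      exact this

theorem first_step {W : Set V} {a u : V} (h : Conn G W a u) (hau : a ≠ u) :
    ∃ x, G.Adj a x ∧ x ∈ W := by
  obtain ⟨p, hp⟩ := h
  cases p with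
  | nil => exact absurd rfl hau
  | @cons _ w _ h q =>
    exact ⟨w, h, hp w (by simp)⟩

theorem key_pair (hB : ∀ i, IsBlock G (B i))
    (hmin : ∀ i, (B i).ncard = 2 ∨
      (MinimallyTwoConnected (G.induce (B i)) ∧ (G.induce (B i)).CliqueFree 3))
    {τ : V → ℕ} (hτ : IsMVDColoring G τ) {i : Fin r} (hnt : (B i).ncard ≠ 2) :
    ∀ a ∈ B i, ∃ b ∈ B i, b ≠ a ∧ τ b = τ a := by
  classical
  have h3 := blk_card3 hmin hnt
  have hcf : (G.induce (B i)).CliqueFree 3 := by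
    rcases hmin i with h | h
    · exact absurd h hnt
    · exact h.2
  intro a ha
  -- first neighbor x
  obtain ⟨u, hu, hua⟩ : ∃ u ∈ B i, u ≠ a := by
    have hne : (B i \ {a}).Nonempty := by
      rw [Set.nonempty_iff_ne_empty]
      intro h
      have hsub : B i ⊆ {a} := by rwa [Set.diff_eq_empty] at h
      have := Set.ncard_le_ncard hsub (Set.toFinite _)
      rw [Set.ncard_singleton] at this
      omega
    obtain ⟨u, hu⟩ := hne
    exact ⟨u, hu.1, hu.2⟩
  obtain ⟨x, hax, hxB⟩ := first_step (blk_conn hB i a ha u hu) (fun h => hua h.symm)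
  have hxa : x ≠ a := fun h => G.irrefl (h ▸ hax)
  -- second neighbor y avoiding x
  obtain ⟨u', hu'B, hu'x, hu'a⟩ : ∃ u', u' ∈ B i ∧ u' ≠ x ∧ u' ≠ a := by
    have hne : (B i \ {x, a}).Nonempty := by
      rw [Set.nonempty_iff_ne_empty]
      intro h
      have hsub : B i ⊆ {x, a} := by rwa [Set.diff_eq_empty] at h
      have h1 := Set.ncard_le_ncard hsub (Set.toFinite _)
      have h2 : ({x, a} : Set V).ncard ≤ 2 := by
        have := Set.ncard_insert_le x ({a} : Set V)
        simpa [Set.ncard_singleton] using this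
      omega
    obtain ⟨u', hu'⟩ := hne
    simp only [Set.mem_diff, Set.mem_insert_iff, Set.mem_singleton_iff] at hu'
    push_neg at hu'
    exact ⟨u', hu'.1, hu'.2.1, hu'.2.2⟩
  obtain ⟨y, hay, hyBx⟩ := first_step
    (blk_nocut hB i x hxB a ⟨ha, hxa ∘ Eq.symm⟩ u' ⟨hu'B, hu'x⟩)
    (fun h => hu'a h.symm)
  have hyB : y ∈ B i := hyBx.1
  have hyx : y ≠ x := fun h => hyBx.2 (by simp [h])
  have hya : y ≠ a := fun h => G.irrefl (h ▸ hay)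
  -- x and y are nonadjacent
  have hnadj : ¬ G.Adj x y := by
    intro hadj
    refine hcf {⟨a, ha⟩, ⟨x, hxB⟩, ⟨y, hyB⟩} ⟨?_, ?_⟩
    · intro s hs t ht hst
      simp only [Finset.coe_insert, Set.mem_insert_iff, Finset.coe_singleton,
        Set.mem_singleton_iff] at hs ht
      have adj : ∀ p q : ↥(B i), G.Adj p.1 q.1 → (G.induce (B i)).Adj p q := fun p q h => h
      rcases hs with rfl | rfl | rfl <;> rcases ht with rfl | rfl | rfl <;>
        first
          | (exact absurd rfl hst)
          | (exact adj _ _ hax)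
          | (exact adj _ _ hay)
          | (exact adj _ _ hax.symm)
          | (exact adj _ _ hay.symm)
          | (exact adj _ _ hadj)
          | (exact adj _ _ hadj.symm)
    · rw [Finset.card_insert_of_notMem, Finset.card_insert_of_notMem, Finset.card_singleton]
      · simp only [Finset.mem_singleton, Subtype.mk.injEq]
        exact fun h => hyx h.symm
      · simp only [Finset.mem_insert, Finset.mem_singleton, Subtype.mk.injEq]
        push_neg
        exact ⟨fun h => hxa h.symm, fun h => hya h.symm⟩
  -- monochromatic cut
  obtain ⟨S, ⟨hxS, hyS, hsep⟩, hmono⟩ := hτ x y (fun h => hyx h.symm) hnadj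
  have haS : a ∈ S := by
    have hw := hsep (Walk.cons hax.symm (Walk.cons hay Walk.nil))
    obtain ⟨z, hz, hzS⟩ := hw
    simp only [Walk.support_cons, Walk.support_nil, List.mem_cons,
      List.mem_singleton, List.not_mem_nil, or_false] at hz
    rcases hz with rfl | rfl | rfl
    · exact absurd hzS hxS
    · exact hzS
    · exact absurd hzS hyS
  by_contra hno
  push_neg at hno
  have hSBa : ∀ z, z ∈ S → z ∈ B i → z = a := by
    intro z hzS hzB
    by_contra hza
    exact hno z hzB hza (hmono z hzS a haS)
  obtain ⟨p, hp⟩ := blk_nocut hB i a ha x ⟨hxB, hxa⟩ y ⟨hyB, hya⟩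
  obtain ⟨z, hz, hzS⟩ := hsep p
  have := hp z hz
  exact this.2 (Set.mem_singleton_iff.mpr (hSBa z hzS this.1))

theorem double_le_of_pairs {τ : V → ℕ} {W : Set V}
    (h : ∀ a ∈ W, ∃ b ∈ W, b ≠ a ∧ τ b = τ a) : 2 * (τ '' W).ncard ≤ W.ncard := by
  classical
  rw [Set.ncard_eq_toFinset_card' W, Set.ncard_eq_toFinset_card' (τ '' W),
    Set.toFinset_image]
  set s := W.toFinset with hs
  have hmem : ∀ a ∈ s, τ a ∈ s.image τ := fun a ha => Finset.mem_image_of_mem τ ha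
  have hcard : s.card = ∑ c ∈ s.image τ, (s.filter fun a => τ a = c).card :=
    Finset.card_eq_sum_card_fiberwise hmem
  have hfib : ∀ c ∈ s.image τ, 2 ≤ (s.filter fun a => τ a = c).card := by
    intro c hc
    obtain ⟨a, haf, hac⟩ := Finset.mem_image.mp hc
    have haW : a ∈ W := by rwa [hs, Set.mem_toFinset] at haf
    obtain ⟨b, hbW, hba, hbc⟩ := h a haW
    refine Finset.one_lt_card.mpr ⟨a, ?_, b, ?_, fun h' => hba h'.symm⟩
    · exact Finset.mem_filter.mpr ⟨haf, hac⟩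
    · exact Finset.mem_filter.mpr ⟨by rwa [hs, Set.mem_toFinset], by rw [hbc, hac]⟩
  calc 2 * (s.image τ).card = (s.image τ).card • 2 := by rw [smul_eq_mul, mul_comm]
    _ ≤ ∑ c ∈ s.image τ, (s.filter fun a => τ a = c).card :=
        Finset.card_nsmul_le_sum _ _ _ hfib
    _ = s.card := hcard.symm

theorem block_color_bound (hB : ∀ i, IsBlock G (B i))
    (hmin : ∀ i, (B i).ncard = 2 ∨
      (MinimallyTwoConnected (G.induce (B i)) ∧ (G.induce (B i)).CliqueFree 3))
    {τ : V → ℕ} (hτ : IsMVDColoring G τ) (i : Fin r) :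
    ((B i).ncard = 2 ∧ (τ '' B i).ncard ≤ 2) ∨ 2 * (τ '' B i).ncard ≤ (B i).ncard := by
  by_cases hnt : (B i).ncard = 2
  · exact Or.inl ⟨hnt, hnt ▸ Set.ncard_image_le (Set.toFinite _)⟩
  · exact Or.inr (double_le_of_pairs (key_pair hB hmin hτ hnt))

theorem exists_block_superset {C₀ : Set V} (h0 : (G.induce C₀).Connected)
    (h1 : NoCutVertex (G.induce C₀)) : ∃ D, C₀ ⊆ D ∧ IsBlock G D := by
  classical
  set F : Set (Set V) := {C | C₀ ⊆ C ∧ (G.induce C).Connected ∧ NoCutVertex (G.induce C)}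
    with hF
  have hFne : F.Nonempty := ⟨C₀, subset_rfl, h0, h1⟩
  obtain ⟨D, hD, hDmax⟩ := Set.Finite.exists_maximalFor Set.ncard F (Set.toFinite F) hFne
  refine ⟨D, hD.1, hD.2.1, hD.2.2, fun C hDC hC1 hC2 => ?_⟩
  have hCF : C ∈ F := ⟨hD.1.trans hDC, hC1, hC2⟩
  have hle : D.ncard ≤ C.ncard := Set.ncard_le_ncard hDC (Set.toFinite _)
  have heq := hDmax hCF hle
  exact (Set.eq_of_subset_of_ncard_le hDC heq (Set.toFinite _)).symm

theorem edge_block (hall : ∀ C : Set V, IsBlock G C → ∃ i, B i = C)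
    {u v : V} (huv : G.Adj u v) : ∃ i, u ∈ B i ∧ v ∈ B i := by
  have hne : u ≠ v := huv.ne
  have hconn0 : (G.induce ({u, v} : Set V)).Connected := by
    rw [induce_connected_iff]
    refine ⟨⟨u, Or.inl rfl⟩, ?_⟩
    have base : Conn G ({u, v} : Set V) u v :=
      ⟨Walk.cons huv Walk.nil, by
        intro z hz
        simp only [Walk.support_cons, Walk.support_nil, List.mem_cons,
          List.mem_singleton, List.not_mem_nil, or_false] at hz
        rcases hz with rfl | rfl
        exacts [Or.inl rfl, Or.inr rfl]⟩
    rintro a (rfl | rfl) b (rfl | rfl)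
    · exact Conn.refl (Or.inl rfl)
    · exact base
    · exact base.symm
    · exact Conn.refl (Or.inr rfl)
  have hnocut0 : NoCutVertex (G.induce ({u, v} : Set V)) := by
    rw [noCutVertex_induce_iff]
    intro x hx a ha b hb
    have hab : a = b := by
      rcases hx with rfl | rfl
      · rcases ha.1 with rfl | rfl
        · exact absurd rfl ha.2
        · rcases hb.1 with rfl | rfl
          · exact absurd rfl hb.2
          · rfl
      · rcases ha.1 with rfl | rfl
        · rcases hb.1 with rfl | rfl
          · rfl
          · exact absurd rfl hb.2
        · exact absurd rfl ha.2
    subst hab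
    exact Conn.refl ⟨ha.1, ha.2⟩
  obtain ⟨D, hsub, hblk⟩ := exists_block_superset hconn0 hnocut0
  obtain ⟨i, hi⟩ := hall D hblk
  exact ⟨i, hi ▸ hsub (Or.inl rfl), hi ▸ hsub (Or.inr rfl)⟩

theorem exists_neighbor (hconn : G.Connected) (hcard : 2 ≤ Fintype.card V) (v : V) :
    ∃ u, G.Adj v u := by
  obtain ⟨u, hu⟩ := Fintype.exists_ne_of_one_lt_card (by omega) v
  obtain ⟨p⟩ := hconn.preconnected v u
  cases p with
  | nil => exact absurd rfl (Ne.symm hu)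
  | @cons _ w _ h q => exact ⟨w, h⟩

theorem cover (hconn : G.Connected) (hall : ∀ C : Set V, IsBlock G C → ∃ i, B i = C)
    (hcard : 2 ≤ Fintype.card V) (v : V) : ∃ i, v ∈ B i := by
  obtain ⟨u, hu⟩ := exists_neighbor hconn hcard v
  obtain ⟨i, hi, _⟩ := edge_block hall hu
  exact ⟨i, hi⟩

theorem linkconn_univ (hconn : G.Connected)
    (hall : ∀ C : Set V, IsBlock G C → ∃ i, B i = C)
    (hBne : ∀ i : Fin r, (B i).Nonempty) (hcard : 2 ≤ Fintype.card V) :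
    LinkConn B (Finset.univ : Finset (Fin r)) := by
  have walkLink : ∀ (u v : V) (p : G.Walk u v) (i j : Fin r), u ∈ B i → v ∈ B j →
      Relation.ReflTransGen (LStep B Finset.univ) i j := by
    intro u v p
    induction p with
    | nil =>
      intro i j hui huj
      exact Relation.ReflTransGen.single ⟨Finset.mem_univ _, ⟨_, hui, huj⟩⟩
    | @cons a w _ h q ih =>
      intro i j hui hvj
      obtain ⟨k, hak, hwk⟩ := edge_block hall h
      exact Relation.ReflTransGen.head ⟨Finset.mem_univ _, ⟨a, hui, hak⟩⟩ (ih k j hwk hvj)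
  intro i _ j _
  obtain ⟨u, hu⟩ := hBne i
  obtain ⟨v, hv⟩ := hBne j
  obtain ⟨p⟩ := hconn.preconnected u v
  exact walkLink u v p i j hu hv

theorem card_one_absurd (hconn : G.Connected)
    (hall : ∀ C : Set V, IsBlock G C → ∃ i, B i = C)
    (hmin : ∀ i, (B i).ncard = 2 ∨
      (MinimallyTwoConnected (G.induce (B i)) ∧ (G.induce (B i)).CliqueFree 3))
    (h1 : Fintype.card V = 1) : False := by
  obtain ⟨v, hv⟩ := Fintype.card_eq_one_iff.mp h1
  have hblk : IsBlock G ({v} : Set V) := by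
    refine ⟨?_, ?_, ?_⟩
    · rw [induce_connected_iff]
      refine ⟨⟨v, rfl⟩, ?_⟩
      rintro a rfl b rfl
      exact Conn.refl rfl
    · rw [noCutVertex_induce_iff]
      rintro x hx a ha
      exfalso
      have hxv : x = v := Set.mem_singleton_iff.mp hx
      have hav : a = v := Set.mem_singleton_iff.mp ha.1
      exact ha.2 (by rw [hav, hxv]; exact rfl)
    · intro C hsub _ _
      refine (Set.eq_of_subset_of_ncard_le hsub ?_ (Set.toFinite _)).symm
      have : C ⊆ {v} := fun w _ => hv w
      exact Set.ncard_le_ncard this (Set.toFinite _)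
  obtain ⟨i, hi⟩ := hall _ hblk
  rcases hmin i with h | ⟨⟨⟨_, _, x, y, z, hxy, _, _⟩, _⟩, _⟩
  · rw [hi, Set.ncard_singleton] at h
    omega
  · exact hxy (Subtype.ext ((hv x.1).trans (hv y.1).symm))

theorem main_ind (hB : ∀ i, IsBlock G (B i)) (hinj : Function.Injective B)
    (hmin : ∀ i, (B i).ncard = 2 ∨
      (MinimallyTwoConnected (G.induce (B i)) ∧ (G.induce (B i)).CliqueFree 3))
    {τ : V → ℕ} (hτ : IsMVDColoring G τ) :
    ∀ (n : ℕ) (S : Finset (Fin r)), S.card = n → S.Nonempty → LinkConn B S →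
      2 * (τ '' (⋃ i ∈ S, B i)).ncard + S.card ≤
        (⋃ i ∈ S, B i).ncard + 2 * (S.filter (fun i => (B i).ncard = 2)).card + 1 := by
  classical
  have hBne : ∀ i : Fin r, (B i).Nonempty := by
    intro i
    rw [← Set.ncard_pos (Set.toFinite _)]
    have := blk_card hmin i
    omega
  intro n
  induction n using Nat.strong_induction_on with
  | _ n IH =>
  intro S hcard hne hlc
  rcases Nat.lt_or_ge n 2 with hn2 | hn2
  · -- base case : n = 1
    have hn1 : S.card = 1 := by
      have := Finset.card_pos.mpr hne
      omega
    obtain ⟨i, rfl⟩ := Finset.card_eq_one.mp hn1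
    have hU : (⋃ j ∈ ({i} : Finset (Fin r)), B j) = B i := by simp
    rw [hU, Finset.card_singleton, Finset.filter_singleton]
    rcases block_color_bound hB hmin hτ i with ⟨h2, hk⟩ | hk
    · rw [if_pos h2, Finset.card_singleton]
      omega
    · by_cases h2 : (B i).ncard = 2
      · rw [if_pos h2, Finset.card_singleton]
        omega
      · rw [if_neg h2, Finset.card_empty]
        omega
  · -- inductive step
    obtain ⟨i, hiS, hne', hlc', j₀, hj₀, hj₀i⟩ := exists_linkage_noncut hBne (hcard ▸ hn2) hlc
    set S' := S.erase i with hS'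
    set U' : Set V := ⋃ j ∈ S', B j with hU'
    have hcard' : S'.card = n - 1 := by rw [hS', Finset.card_erase_of_mem hiS, hcard]
    have hIH := IH (n - 1) (by omega) S' hcard' hne' hlc'
    rw [← hU'] at hIH
    -- overlap is a single point
    obtain ⟨v₀, hv₀B, hv₀U⟩ : ∃ v₀, v₀ ∈ B i ∧ v₀ ∈ U' := by
      obtain ⟨v₀, hv₀⟩ := hj₀i
      exact ⟨v₀, hv₀.2, Set.mem_biUnion hj₀ hv₀.1⟩
    have hover : ∀ z, z ∈ B i → z ∈ U' → z = v₀ := by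
      intro z hzB hzU
      by_contra hzv
      obtain ⟨j, hjS', hzj⟩ := Set.mem_iUnion₂.mp hzU
      obtain ⟨l, hlS', hvl⟩ := Set.mem_iUnion₂.mp hv₀U
      obtain ⟨q, f, g, hf0, hfq, hfS, hg⟩ :=
        chain_of_rtg (fun _ => trivial) hjS' hBne (hlc' j hjS' l hlS')
      exact no_two_overlap hB hinj hmin q f g i z v₀
        (fun a ha => Finset.ne_of_mem_erase (hfS a ha))
        (fun a ha => hg a ha) hzv hzB (hf0 ▸ hzj) hv₀B (hfq ▸ hvl)
    have hdiff : B i \ U' = B i \ {v₀} := by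
      ext z
      simp only [Set.mem_diff, Set.mem_singleton_iff]
      constructor
      · rintro ⟨hz1, hz2⟩
        exact ⟨hz1, fun h => hz2 (h ▸ hv₀U)⟩
      · rintro ⟨hz1, hz2⟩
        exact ⟨hz1, fun h => hz2 (hover z hz1 h)⟩
    have hUS : (⋃ j ∈ S, B j) = B i ∪ U' := by
      conv_lhs => rw [← Finset.insert_erase hiS]
      rw [Finset.set_biUnion_insert]
    -- cardinalities
    have hcU : (⋃ j ∈ S, B j).ncard = U'.ncard + (B i \ {v₀}).ncard := by
      rw [hUS, Set.union_comm, ← Set.union_diff_self,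
        Set.ncard_union_eq Set.disjoint_sdiff_right (Set.toFinite _) (Set.toFinite _), hdiff]
    have hBi1 : (B i \ {v₀}).ncard + 1 = (B i).ncard :=
      Set.ncard_diff_singleton_add_one hv₀B (Set.toFinite _)
    -- colors
    have hv₀c : τ v₀ ∈ τ '' U' := Set.mem_image_of_mem τ hv₀U
    have hcC : (τ '' (⋃ j ∈ S, B j)).ncard ≤ (τ '' U').ncard + (τ '' B i \ {τ v₀}).ncard := by
      calc (τ '' (⋃ j ∈ S, B j)).ncard = (τ '' (B i ∪ U')).ncard := by rw [hUS]
        _ = (τ '' B i ∪ τ '' U').ncard := by rw [Set.image_union]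
        _ ≤ ((τ '' U') ∪ (τ '' B i \ {τ v₀})).ncard := by
            apply Set.ncard_le_ncard _ (Set.toFinite _)
            intro z hz
            rcases hz with hz | hz
            · by_cases hzv : z = τ v₀
              · exact Or.inl (hzv ▸ hv₀c)
              · exact Or.inr ⟨hz, hzv⟩
            · exact Or.inl hz
        _ ≤ (τ '' U').ncard + (τ '' B i \ {τ v₀}).ncard := Set.ncard_union_le _ _
    have hCi1 : (τ '' B i \ {τ v₀}).ncard + 1 = (τ '' B i).ncard :=
      Set.ncard_diff_singleton_add_one (Set.mem_image_of_mem τ hv₀B) (Set.toFinite _)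
    -- filter cards
    have hfilter : (S.filter (fun j => (B j).ncard = 2)).card =
        (S'.filter (fun j => (B j).ncard = 2)).card + (if (B i).ncard = 2 then 1 else 0) := by
      conv_lhs => rw [← Finset.insert_erase hiS]
      rw [Finset.filter_insert]
      by_cases h2 : (B i).ncard = 2
      · rw [if_pos h2, if_pos h2, Finset.card_insert_of_notMem
          (fun h => (Finset.mem_erase.mp (Finset.mem_of_mem_filter i h)).1 rfl)]
      · rw [if_neg h2, if_neg h2, Nat.add_zero]
    have hScard : S.card = S'.card + 1 := by
      rw [hS', Finset.card_erase_of_mem hiS]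
      have := Finset.card_pos.mpr hne
      omega
    rcases block_color_bound hB hmin hτ i with ⟨h2, hk⟩ | hk
    · rw [hfilter, if_pos h2]
      omega
    · have h2' : ((if (B i).ncard = 2 then 1 else 0) : ℕ) ≤ 1 := by
        by_cases h2 : (B i).ncard = 2 <;> simp [h2]
      rw [hfilter]
      omega

end Blocks

end MVDAux

theorem mvd_blocks_minimally_two_connected [Fintype V] (G : SimpleGraph V)
    (hconn : G.Connected)
    (r : ℕ) (B : Fin r → Set V)
    (hB : ∀ i, IsBlock G (B i)) (hinj : Function.Injective B)
    (hall : ∀ C : Set V, IsBlock G C → ∃ i, B i = C)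
    (t : ℕ) (ht : t = {i : Fin r | (B i).ncard = 2}.ncard)
    (hmin : ∀ i, (B i).ncard = 2 ∨
      (MinimallyTwoConnected (G.induce (B i)) ∧ (G.induce (B i)).CliqueFree 3)) :
    mvd G ≤ (Fintype.card V + 2 * t - r + 1) / 2 := by
  classical
  have hcard1 : 1 ≤ Fintype.card V := Fintype.card_pos_iff.mpr hconn.nonempty
  rcases Nat.lt_or_ge (Fintype.card V) 2 with hlt | hcard
  · exact absurd (by omega : Fintype.card V = 1)
      (fun h => MVDAux.card_one_absurd hconn hall hmin h)
  have hBne : ∀ i : Fin r, (B i).Nonempty := by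
    intro i
    rw [← Set.ncard_pos (Set.toFinite _)]
    have := MVDAux.blk_card hmin i
    omega
  apply csSup_le'
  rintro k ⟨τ, hτ, rfl⟩
  have huniv_ne : (Finset.univ : Finset (Fin r)).Nonempty := by
    obtain ⟨v⟩ := hconn.nonempty
    obtain ⟨i, _⟩ := MVDAux.cover hconn hall hcard v
    exact ⟨i, Finset.mem_univ i⟩
  have hU : (⋃ i ∈ (Finset.univ : Finset (Fin r)), B i) = Set.univ := by
    rw [Set.eq_univ_iff_forall]
    intro v
    obtain ⟨i, hi⟩ := MVDAux.cover hconn hall hcard v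
    exact Set.mem_biUnion (Finset.mem_univ i) hi
  have H := MVDAux.main_ind hB hinj hmin hτ Finset.univ.card Finset.univ rfl huniv_ne
    (MVDAux.linkconn_univ hconn hall hBne hcard)
  rw [hU, Set.image_univ] at H
  have h1 : (Finset.univ : Finset (Fin r)).card = r := by simp
  have h2 : (Set.univ : Set V).ncard = Fintype.card V := by
    rw [Set.ncard_univ, Nat.card_eq_fintype_card]
  have h3 : ((Finset.univ : Finset (Fin r)).filter (fun i => (B i).ncard = 2)).card = t := by
    rw [ht, Set.ncard_eq_toFinset_card', Set.toFinset_setOf]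
  rw [h1, h2, h3] at H
  rw [Nat.le_div_iff_mul_le (by norm_num : (0:ℕ) < 2)]
  omega
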